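/- Let Φ be an invertible n×n real matrix such that Φ, viewed as a complex matrix, has no eigenvalue in the interval (-∞,0]. Then Φ has a real logarithm: there exists a real n×n matrix B with exp(B) = Φ. -/

import Mathlib

attribute [local instance] Matrix.normedAddCommGroup Matrix.normedSpace

open NormedSpace

/-- In a commutative real Banach algebra, if the segment from `1` to `a` consists of
units, then `a` is an exponential. -/
theorem exists_exp_eq_of_isUnit_segment {A : Type*} [NormedCommRing A] [NormedAlgebra ℝ A]
    [CompleteSpace A] (a : A)
    (h : ∀ t : ℝ, t ∈ Set.Icc (0:ℝ) 1 → IsUnit (1 + t • (a - 1))) :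
    ∃ b : A, exp b = a := by
  set c : ℝ → A := fun t => 1 + t • (a - 1) with hc
  have hCc : Continuous c := continuous_const.add (continuous_id.smul continuous_const)
  have hU : IsOpen {t : ℝ | IsUnit (c t)} := Units.isOpen.preimage hCc
  set U : Set ℝ := {t : ℝ | IsUnit (c t)} with hUdef
  have hIccU : Set.Icc (0:ℝ) 1 ⊆ U := fun t ht => h t ht
  set f : ℝ → A := fun t => (a - 1) * Ring.inverse (c t) with hf
  have hfc : ∀ t ∈ U, ContinuousAt f t := by
    intro t ht
    obtain ⟨u, hu⟩ := ht
    have h1 : ContinuousAt Ring.inverse (c t) := hu ▸ NormedRing.inverse_continuousAt u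
    exact continuousAt_const.mul (h1.comp hCc.continuousAt)
  have hfU : ContinuousOn f U := fun t ht => (hfc t ht).continuousWithinAt
  set B : ℝ → A := fun t => ∫ s in (0:ℝ)..t, f s with hB
  have hBderiv : ∀ t ∈ Set.Icc (0:ℝ) 1, HasDerivAt B (f t) t := by
    intro t ht
    refine intervalIntegral.integral_hasDerivAt_right ?_ ?_ (hfc t (hIccU ht))
    · apply ContinuousOn.intervalIntegrable
      apply hfU.mono
      rw [Set.uIcc_of_le ht.1]
      exact fun s hs => hIccU ⟨hs.1, hs.2.trans ht.2⟩
    · exact ⟨U, hU.mem_nhds (hIccU ht), hfU.aestronglyMeasurable hU.measurableSet⟩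
  have key : ∀ t ∈ Set.Icc (0:ℝ) 1,
      HasDerivAt (fun t => exp (-(B t)) * c t) 0 t := by
    intro t ht
    have hct : IsUnit (c t) := hIccU ht
    have h1 : HasDerivAt (fun t => -(B t)) (-(f t)) t := (hBderiv t ht).neg
    have h2 : HasDerivAt (fun t => exp (-(B t))) (exp (-(B t)) * (-(f t))) t := by
      have := (hasFDerivAt_exp (𝕂 := ℝ) (x := -(B t))).comp_hasDerivAt t h1
      simpa [smul_eq_mul, Function.comp_def] using this
    have h3 : HasDerivAt c (a - 1) t := by
      simpa [hc] using ((hasDerivAt_id t).smul_const (a - 1)).const_add 1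
    have h4 := h2.mul h3
    have hfc' : f t * c t = a - 1 := by
      rw [hf]
      show ((a - 1) * Ring.inverse (c t)) * c t = a - 1
      rw [mul_assoc, Ring.inverse_mul_cancel _ hct, mul_one]
    have h0 : exp (-(B t)) * (-(f t)) * c t + exp (-(B t)) * (a - 1) = 0 := by
      rw [mul_neg, neg_mul, mul_assoc, hfc', neg_add_cancel]
    rw [h0] at h4
    exact h4
  have hg1 : exp (-(B 1)) * c 1 = exp (-(B 0)) * c 0 := by
    have hcont : ContinuousOn (fun t => exp (-(B t)) * c t) (Set.Icc 0 1) :=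
      fun t ht => ((key t ht).continuousAt).continuousWithinAt
    exact constant_of_has_deriv_right_zero hcont
      (fun t ht => ((key t (Set.mem_Icc_of_Ico ht)).hasDerivWithinAt)) 1
      (Set.right_mem_Icc.mpr zero_le_one)
  have hB0 : B 0 = 0 := intervalIntegral.integral_same
  have hc0 : c 0 = 1 := by simp [hc]
  have hc1 : c 1 = a := by simp [hc]
  have hg1' : exp (-(B 1)) * a = 1 := by
    rw [← hc1, hg1, hB0, hc0, neg_zero, exp_zero, one_mul]
  refine ⟨B 1, ?_⟩
  have hee : exp (B 1) * exp (-(B 1)) = 1 := by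
    rw [← exp_add_of_mem_ball (𝕂 := ℝ) ((expSeries_radius_eq_top ℝ A).symm ▸ edist_lt_top _ _) ((expSeries_radius_eq_top ℝ A).symm ▸ edist_lt_top _ _), add_neg_cancel, exp_zero]
  calc exp (B 1) = exp (B 1) * (exp (-(B 1)) * a) := by rw [hg1', mul_one]
    _ = (exp (B 1) * exp (-(B 1))) * a := by rw [mul_assoc]
    _ = a := by rw [hee, one_mul]

/-- In a finite-dimensional subalgebra, an element that is a unit in the ambient
algebra is a unit in the subalgebra. -/
theorem isUnit_of_isUnit_coe {𝔸 : Type*} [Ring 𝔸] [Algebra ℝ 𝔸] {S : Subalgebra ℝ 𝔸}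
    [FiniteDimensional ℝ S] {x : S} (hx : IsUnit (x : 𝔸)) : IsUnit x := by
  have hinj : Function.Injective (LinearMap.mulLeft ℝ x) := by
    intro y z hyz
    have : (x : 𝔸) * y = (x : 𝔸) * z := congrArg Subtype.val hyz
    exact Subtype.ext (hx.mul_left_cancel this)
  obtain ⟨y, hy⟩ := LinearMap.injective_iff_surjective.mp hinj 1
  have hxy : x * y = 1 := hy
  have hinj' : Function.Injective (LinearMap.mulRight ℝ x) := by
    intro y z hyz
    have : (y : 𝔸) * x = (z : 𝔸) * x := congrArg Subtype.val hyz
    exact Subtype.ext (hx.mul_right_cancel this)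
  obtain ⟨z, hz⟩ := LinearMap.injective_iff_surjective.mp hinj' 1
  have hzx : z * x = 1 := hz
  have hyz : y = z := by
    calc y = 1 * y := (one_mul y).symm
      _ = z * x * y := by rw [hzx]
      _ = z * (x * y) := mul_assoc _ _ _
      _ = z := by rw [hxy, mul_one]
  exact ⟨⟨x, y, hxy, hyz ▸ hzx⟩, rfl⟩

/-- The segment from `1` to `Φ` consists of invertible matrices. -/
theorem segment_isUnit {n : Type*} [Fintype n] [DecidableEq n] (Φ : Matrix n n ℝ)
    (hspec : ∀ x : ℝ, x ≤ 0 → (x : ℂ) ∉ spectrum ℂ (Φ.map Complex.ofReal)) :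
    ∀ t : ℝ, t ∈ Set.Icc (0:ℝ) 1 → IsUnit ((1 : Matrix n n ℝ) + t • (Φ - 1)) := by
  intro t ht
  rcases eq_or_lt_of_le ht.1 with h0 | h0
  · simp [← h0]
  set F : Matrix n n ℂ := Φ.map Complex.ofReal with hF
  have hmap : ((1 : Matrix n n ℝ) + t • (Φ - 1)).map Complex.ofReal
      = (1 : Matrix n n ℂ) + (t : ℂ) • (F - 1) := by
    ext i j
    by_cases hij : i = j <;>
      simp [hF, Matrix.map_apply, Matrix.add_apply, Matrix.smul_apply, Matrix.sub_apply,
        Matrix.one_apply, hij]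
  have hx : ((t - 1) / t : ℝ) ≤ 0 := by
    apply div_nonpos_of_nonpos_of_nonneg (by linarith [ht.2]) ht.1
  have hunit : IsUnit (algebraMap ℂ (Matrix n n ℂ) (((t - 1) / t : ℝ) : ℂ) - F) :=
    spectrum.notMem_iff.mp (hspec _ hx)
  have hne : ((-t : ℝ) : ℂ) ≠ 0 := by
    simp only [ne_eq, Complex.ofReal_eq_zero]
    linarith
  have hunitC : IsUnit ((1 : Matrix n n ℂ) + (t : ℂ) • (F - 1)) := by
    have heq : (1 : Matrix n n ℂ) + (t : ℂ) • (F - 1)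
        = algebraMap ℂ (Matrix n n ℂ) ((-t : ℝ) : ℂ)
          * (algebraMap ℂ (Matrix n n ℂ) (((t - 1) / t : ℝ) : ℂ) - F) := by
      have hts : ((-t:ℝ):ℂ) * (((t - 1) / t : ℝ):ℂ) = 1 - (t:ℂ) := by
        have ht0 : (t:ℂ) ≠ 0 := by exact_mod_cast (by linarith : (t:ℝ) ≠ 0)
        push_cast
        field_simp
        ring
      rw [← Algebra.smul_def, Algebra.algebraMap_eq_smul_one, smul_sub, smul_sub, smul_smul,
        hts]
      push_cast
      module
    rw [heq]
    exact ((isUnit_iff_ne_zero.mpr hne).map (algebraMap ℂ (Matrix n n ℂ))).mul hunit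
  rw [Matrix.isUnit_iff_isUnit_det]
  rw [Matrix.isUnit_iff_isUnit_det] at hunitC
  rw [← hmap] at hunitC
  have hdet : (((1 : Matrix n n ℝ) + t • (Φ - 1)).map Complex.ofReal).det
      = (((1 : Matrix n n ℝ) + t • (Φ - 1)).det : ℂ) := by
    have h := RingHom.map_det Complex.ofRealHom ((1 : Matrix n n ℝ) + t • (Φ - 1))
    rw [RingHom.mapMatrix_apply] at h
    exact h.symm
  rw [hdet] at hunitC
  rw [isUnit_iff_ne_zero]
  intro h0'
  rw [h0'] at hunitC
  simp at hunitC

/-- If an invertible real matrix `Φ`, viewed as a complex matrix, has no eigenvalue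
in `(-∞, 0]`, then `Φ` has a real logarithm. -/
theorem magnus_stmt1 {n : Type*} [Fintype n] [DecidableEq n] (Φ : Matrix n n ℝ)
    (hΦ : IsUnit Φ)
    (hspec : ∀ x : ℝ, x ≤ 0 → (x : ℂ) ∉ spectrum ℂ (Φ.map Complex.ofReal)) :
    ∃ B : Matrix n n ℝ, NormedSpace.exp B = Φ := by
  letI : SeminormedRing (Matrix n n ℝ) := Matrix.linftyOpSemiNormedRing
  letI : NormedRing (Matrix n n ℝ) := Matrix.linftyOpNormedRing
  letI : NormedAlgebra ℝ (Matrix n n ℝ) := Matrix.linftyOpNormedAlgebra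
  set S : Subalgebra ℝ (Matrix n n ℝ) := Algebra.adjoin ℝ {Φ} with hS
  letI : CommRing S := Algebra.adjoinCommRingOfComm ℝ (by
    rintro a ha b hb
    rw [Set.mem_singleton_iff] at ha hb
    subst ha; subst hb; rfl)
  letI : NormedCommRing S := { (inferInstance : NormedRing S) with mul_comm := mul_comm }
  haveI : FiniteDimensional ℝ S :=
    inferInstanceAs (FiniteDimensional ℝ (Subalgebra.toSubmodule S))
  haveI : CompleteSpace S := by
    haveI : IsUniformAddGroup S := SeminormedAddCommGroup.to_isUniformAddGroup
    exact FiniteDimensional.complete ℝ S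
  set a : S := ⟨Φ, Algebra.self_mem_adjoin_singleton ℝ Φ⟩ with ha
  have hseg : ∀ t : ℝ, t ∈ Set.Icc (0:ℝ) 1 → IsUnit (1 + t • (a - 1)) := by
    intro t ht
    apply isUnit_of_isUnit_coe
    have hco : ((1 + t • (a - 1) : S) : Matrix n n ℝ) = 1 + t • (Φ - 1) := by
      push_cast
      rfl
    rw [hco]
    exact segment_isUnit Φ hspec t ht
  obtain ⟨b, hb⟩ := exists_exp_eq_of_isUnit_segment a hseg
  refine ⟨(b : Matrix n n ℝ), ?_⟩
  have hmap := map_exp_of_mem_ball (𝕂 := ℝ) (S.val) continuous_subtype_val b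
    ((expSeries_radius_eq_top ℝ S).symm ▸ edist_lt_top _ _)
  rw [hb] at hmap
  exact hmap.symm
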